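/- Let (Ω, μ) be a finite measure space, H a separable Hilbert space with L²(Ω) separable, D ⊆ L^∞(Ω) a determining set for L¹(Ω), ℓ ∈ ℕ, and F₁, …, F_m ∈ L²(Ω, H). Suppose J* is a measurable range function such that for a.e. ω ∈ Ω and every subspace W ⊆ H with dim W ≤ ℓ, Σ_{j=1}^m ‖F_j(ω) − P_{J*(ω)} F_j(ω)‖²_H ≤ Σ_{j=1}^m ‖F_j(ω) − P_W F_j(ω)‖²_H. Let M* = {Φ ∈ L²(Ω, H) : Φ(ω) ∈ J*(ω) a.e.}. Then for every D-MI space M ⊆ L²(Ω, H) generated by at most ℓ elements, Σ_{j=1}^m ‖F_j − P_{M*} F_j‖² ≤ Σ_{j=1}^m ‖F_j − P_M F_j‖². -/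

import Mathlib

open MeasureTheory
open scoped ComplexInnerProductSpace ENNReal

open Filter Topology


lemma measurable_of_measurable_dist' {Ω : Type*} [MeasurableSpace Ω] {H : Type*}
    [MetricSpace H] [SecondCountableTopology H] [MeasurableSpace H] [BorelSpace H]
    {g : Ω → H} (h : ∀ c : H, Measurable fun ω => dist (g ω) c) : Measurable g := by
  apply measurable_of_isOpen
  intro s hs
  obtain ⟨T, hTc, hTd⟩ := TopologicalSpace.exists_countable_dense H
  haveI : Countable T := hTc.to_subtype
  have key : g ⁻¹' s =
      ⋃ (c : T) (q : ℚ) (_ : Metric.ball (c : H) q ⊆ s), g ⁻¹' Metric.ball (c : H) q := by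
    ext ω
    simp only [Set.mem_iUnion, Set.mem_preimage]
    constructor
    · intro hω
      obtain ⟨ε, hε, hball⟩ := Metric.isOpen_iff.mp hs _ hω
      obtain ⟨c, hcT, hc⟩ := hTd.exists_dist_lt (g ω) (by positivity : (0:ℝ) < ε/2)
      obtain ⟨q, hq1, hq2⟩ := exists_rat_btwn hc
      refine ⟨⟨c, hcT⟩, q, ?_, ?_⟩
      · intro y hy
        apply hball
        have : dist y (g ω) ≤ dist y c + dist c (g ω) := dist_triangle _ _ _
        have h2 : dist c (g ω) < ε / 2 := by rw [dist_comm]; linarith [hq1]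
        have h3 : dist y c < q := hy
        simp only [Metric.mem_ball]
        calc dist y (g ω) ≤ dist y c + dist c (g ω) := this
          _ < q + ε / 2 := by linarith
          _ ≤ ε / 2 + ε / 2 := by linarith [hq2.le]
          _ = ε := by ring
      · exact Metric.mem_ball.mpr (by exact_mod_cast hq1)
    · rintro ⟨c, q, hsub, hmem⟩
      exact hsub hmem
  rw [key]
  refine MeasurableSet.iUnion fun c => MeasurableSet.iUnion fun q =>
    MeasurableSet.iUnion fun _ => ?_
  have : g ⁻¹' Metric.ball (c : H) q = {ω | dist (g ω) (c : H) < q} := by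
    ext ω; simp [Metric.mem_ball]
  rw [this]
  exact measurableSet_lt (h c) measurable_const


-- infDist to a submodule with orthogonal projection
lemma infDist_eq_norm_sub_proj {H : Type*} [NormedAddCommGroup H] [InnerProductSpace ℂ H]
    (K : Submodule ℂ H) [K.HasOrthogonalProjection] (u : H) :
    Metric.infDist u (K : Set H) = ‖u - Submodule.orthogonalProjectionOnto K u‖ := by
  rw [Metric.infDist_eq_iInf, ← Submodule.starProjection_apply, Submodule.starProjection_minimal]
  exact iInf_congr fun v => (dist_eq_norm _ _)

-- measurability of ω ↦ P_{J ω} a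
lemma measurable_proj_const {Ω : Type*} [MeasurableSpace Ω]
    {H : Type*} [NormedAddCommGroup H] [InnerProductSpace ℂ H]
    [SecondCountableTopology H] [MeasurableSpace H] [BorelSpace H]
    (J : Ω → Submodule ℂ H) [∀ ω, CompleteSpace (J ω)]
    (hmeas : ∀ a b : H, Measurable fun ω => ⟪(Submodule.orthogonalProjectionOnto (J ω) a : H), b⟫)
    (a : H) : Measurable fun ω => (Submodule.orthogonalProjectionOnto (J ω) a : H) := by
  apply measurable_of_measurable_dist'
  intro c
  have hnormsq : ∀ ω, ‖(Submodule.orthogonalProjectionOnto (J ω) a : H)‖ ^ 2 =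
      RCLike.re (K := ℂ) ⟪(Submodule.orthogonalProjectionOnto (J ω) a : H), a⟫ := by
    intro ω
    set P := Submodule.orthogonalProjectionOnto (J ω)
    have horth : a - (P a : H) ∈ (J ω)ᗮ := Submodule.sub_starProjection_mem_orthogonal a
    have h0 : ⟪(P a : H), a - (P a : H)⟫ = 0 :=
      (Submodule.mem_orthogonal _ _).mp horth _ (P a).2
    have : ⟪(P a : H), a⟫ = ⟪(P a : H), (P a : H)⟫ := by
      have := inner_sub_right (𝕜 := ℂ) (P a : H) a (P a : H)
      rw [h0] at this
      linear_combination -this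
    rw [this]; exact (inner_self_eq_norm_sq (𝕜 := ℂ) _).symm
  have key : ∀ ω, dist ((Submodule.orthogonalProjectionOnto (J ω) a : H)) c =
      Real.sqrt (RCLike.re (K := ℂ) ⟪(Submodule.orthogonalProjectionOnto (J ω) a : H), a⟫
        - 2 * RCLike.re (K := ℂ) ⟪(Submodule.orthogonalProjectionOnto (J ω) a : H), c⟫ + ‖c‖ ^ 2) := by
    intro ω
    rw [dist_eq_norm, ← Real.sqrt_sq (norm_nonneg _), @norm_sub_sq ℂ, hnormsq]
  simp only [key]
  apply Measurable.sqrt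
  apply Measurable.add
  · apply Measurable.sub
    · exact (RCLike.measurable_re (𝕜 := ℂ)).comp (hmeas a a)
    · exact ((RCLike.measurable_re (𝕜 := ℂ)).comp (hmeas a c)).const_mul 2
  · exact measurable_const

-- L2 norm squared as integral
lemma L2_norm_sq_eq_integral {Ω : Type*} [MeasurableSpace Ω] {μ : Measure Ω}
    {H : Type*} [NormedAddCommGroup H] [InnerProductSpace ℂ H] (f : Lp H 2 μ) :
    ‖f‖ ^ 2 = ∫ ω, ‖f ω‖ ^ 2 ∂μ ∧ Integrable (fun ω => ‖f ω‖ ^ 2) μ := by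
  have hint : Integrable (fun ω => ⟪f ω, f ω⟫) μ := L2.integrable_inner f f
  have hre : Integrable (fun ω => RCLike.re (K := ℂ) ⟪f ω, f ω⟫) μ := hint.re
  have hcongr : (fun ω => RCLike.re (K := ℂ) ⟪f ω, f ω⟫) = fun ω => ‖f ω‖ ^ 2 := by
    funext ω; exact inner_self_eq_norm_sq _
  constructor
  · rw [norm_sq_eq_re_inner (𝕜 := ℂ), L2.inner_def, ← integral_re hint, ← hcongr]
  · rw [← hcongr]; exact hre
lemma stronglyMeasurable_proj_comp {Ω : Type*} [MeasurableSpace Ω]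
    {H : Type*} [NormedAddCommGroup H] [InnerProductSpace ℂ H]
    [SecondCountableTopology H] [MeasurableSpace H] [BorelSpace H]
    (J : Ω → Submodule ℂ H) [∀ ω, CompleteSpace (J ω)]
    (hmeas : ∀ a b : H, Measurable fun ω => ⟪(Submodule.orthogonalProjectionOnto (J ω) a : H), b⟫)
    {f : Ω → H} (hf : StronglyMeasurable f) :
    Measurable fun ω => (Submodule.orthogonalProjectionOnto (J ω) (f ω) : H) := by
  have hsimple : ∀ s : SimpleFunc Ω H,
      Measurable fun ω => (Submodule.orthogonalProjectionOnto (J ω) (s ω) : H) := by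
    intro s
    classical
    induction s using MeasureTheory.SimpleFunc.induction with
    | @const c E hs =>
      have : (fun ω => (Submodule.orthogonalProjectionOnto (J ω)
          ((SimpleFunc.piecewise E hs (SimpleFunc.const Ω c) (SimpleFunc.const Ω 0)) ω) : H)) =
          fun ω => if ω ∈ E then (Submodule.orthogonalProjectionOnto (J ω) c : H) else 0 := by
        funext ω
        by_cases hω : ω ∈ E <;>
          simp [SimpleFunc.piecewise_apply, hω]
      rw [this]
      exact Measurable.ite hs (measurable_proj_const J hmeas c) measurable_const
    | @add f g _ hfm hgm =>
      have : (fun ω => (Submodule.orthogonalProjectionOnto (J ω) ((f + g) ω) : H)) =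
          fun ω => (Submodule.orthogonalProjectionOnto (J ω) (f ω) : H) +
            (Submodule.orthogonalProjectionOnto (J ω) (g ω) : H) := by
        funext ω
        simp [map_add]
      rw [this]
      exact hfm.add hgm
  apply measurable_of_tendsto_metrizable
    (fun n => hsimple (hf.approx n))
  rw [tendsto_pi_nhds]
  intro ω
  have hcont : Continuous fun x : H => (Submodule.orthogonalProjectionOnto (J ω) x : H) :=
    continuous_subtype_val.comp (Submodule.orthogonalProjectionOnto (J ω)).continuous
  exact (hcont.tendsto (f ω)).comp (hf.tendsto_approx ω)

/-- Optimality of the MI space built from a pointwise optimal measurable range function: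
if for a.e. `ω` the space `J*(ω)` minimizes `Σⱼ ‖Fⱼ(ω) − P_W Fⱼ(ω)‖²` over all subspaces
`W ⊆ H` of dimension at most `ℓ`, then the associated MI space
`M* = {Φ : Φ(ω) ∈ J*(ω) a.e.}` minimizes `Σⱼ ‖Fⱼ − P_M Fⱼ‖²` over all `D`-MI spaces `M`
of length at most `ℓ` (equivalently, with range function of dimension at most `ℓ` a.e.).
Errors are expressed via distances, since `‖F − P_M F‖ = dist F M` for closed `M`. -/
theorem optimal_MI_space
    {Ω : Type*} [MeasurableSpace Ω] (μ : Measure Ω) [IsFiniteMeasure μ]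
    {H : Type*} [NormedAddCommGroup H] [InnerProductSpace ℂ H] [CompleteSpace H]
    [SecondCountableTopology H]
    (D : Set (Ω → ℂ)) (hD_mem : ∀ g ∈ D, MemLp g ∞ μ)
    (hD_det : ∀ f : Ω → ℂ, Integrable f μ →
      (∀ g ∈ D, ∫ ω, f ω * g ω ∂μ = 0) → f =ᵐ[μ] 0)
    (ℓ m : ℕ) (F : Fin m → Lp H 2 μ)
    (Jstar : Ω → Submodule ℂ H) [instJs : ∀ ω, CompleteSpace (Jstar ω)]
    (hJstar_meas : ∀ a b : H,
      Measurable fun ω => ⟪(Submodule.orthogonalProjectionOnto (Jstar ω) a : H), b⟫)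
    (hJstar_dim : ∀ᵐ ω ∂μ, Module.rank ℂ (Jstar ω) ≤ ℓ)
    (hopt : ∀ᵐ ω ∂μ, ∀ W : Submodule ℂ H, FiniteDimensional ℂ W →
      Module.finrank ℂ W ≤ ℓ →
      ∑ j, (Metric.infDist ((F j : Ω → H) ω) (Jstar ω : Set H)) ^ 2 ≤
        ∑ j, (Metric.infDist ((F j : Ω → H) ω) (W : Set H)) ^ 2) :
    ∀ (M : Submodule ℂ (Lp H 2 μ)) (J : Ω → Submodule ℂ H),
      (∀ ω, IsClosed ((J ω) : Set H)) →
      (∀ Φ : Lp H 2 μ, Φ ∈ M ↔ ∀ᵐ ω ∂μ, Φ ω ∈ J ω) →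
      (∀ᵐ ω ∂μ, Module.rank ℂ (J ω) ≤ ℓ) →
      ∑ j, (Metric.infDist (F j)
          {Φ : Lp H 2 μ | ∀ᵐ ω ∂μ, Φ ω ∈ Jstar ω}) ^ 2 ≤
        ∑ j, (Metric.infDist (F j) (M : Set (Lp H 2 μ))) ^ 2 := by
  intro M J hJclosed hM hJdim
  classical
  borelize H
  set S : Set (Lp H 2 μ) := {Φ : Lp H 2 μ | ∀ᵐ ω ∂μ, Φ ω ∈ Jstar ω} with hS
  set g : Fin m → Ω → ℝ :=
    fun j ω => Metric.infDist ((F j : Ω → H) ω) (Jstar ω : Set H) with hg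
  -- Step A : per-j integrability and bound via the pointwise projection
  have hkey : ∀ j : Fin m, Integrable (fun ω => g j ω ^ 2) μ ∧
      Metric.infDist (F j) S ^ 2 ≤ ∫ ω, g j ω ^ 2 ∂μ := by
    intro j
    obtain ⟨f₀, hf₀, hae⟩ := Lp.aestronglyMeasurable (F j)
    have hψm : Measurable fun ω => (Submodule.orthogonalProjectionOnto (Jstar ω) (f₀ ω) : H) :=
      stronglyMeasurable_proj_comp Jstar hJstar_meas hf₀
    have haeq : (fun ω => (Submodule.orthogonalProjectionOnto (Jstar ω) ((F j : Ω → H) ω) : H)) =ᵐ[μ]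
        (fun ω => (Submodule.orthogonalProjectionOnto (Jstar ω) (f₀ ω) : H)) := by
      filter_upwards [hae] with ω h using by rw [h]
    have haesm : AEStronglyMeasurable
        (fun ω => (Submodule.orthogonalProjectionOnto (Jstar ω) ((F j : Ω → H) ω) : H)) μ :=
      ⟨_, hψm.stronglyMeasurable, haeq⟩
    have hnorm : ∀ (ω : Ω) (x : H), ‖(Submodule.orthogonalProjectionOnto (Jstar ω) x : H)‖ ≤ ‖x‖ := by
      intro ω x
      simpa using (Submodule.orthogonalProjectionOnto (Jstar ω)).le_of_opNorm_le (Submodule.orthogonalProjectionOnto_norm_le _) x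
    have hmem : MemLp (fun ω => (Submodule.orthogonalProjectionOnto (Jstar ω) ((F j : Ω → H) ω) : H)) 2 μ :=
      (Lp.memLp (F j)).of_le haesm (Filter.Eventually.of_forall fun ω => hnorm ω _)
    set Φ : Lp H 2 μ := hmem.toLp _ with hΦ
    have hΦae : (Φ : Ω → H) =ᵐ[μ]
        fun ω => (Submodule.orthogonalProjectionOnto (Jstar ω) ((F j : Ω → H) ω) : H) := hmem.coeFn_toLp
    have hΦS : Φ ∈ S := by
      filter_upwards [hΦae] with ω h
      rw [h]; exact SetLike.coe_mem _
    have h1 : Metric.infDist (F j) S ≤ dist (F j) Φ := Metric.infDist_le_dist_of_mem hΦS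
    obtain ⟨heq, hint⟩ := L2_norm_sq_eq_integral (F j - Φ)
    have haediff : (fun ω => ‖(F j - Φ : Lp H 2 μ) ω‖ ^ 2) =ᵐ[μ] fun ω => g j ω ^ 2 := by
      filter_upwards [Lp.coeFn_sub (F j) Φ, hΦae] with ω h₁ h₂
      show ‖(F j - Φ : Lp H 2 μ) ω‖ ^ 2 =
        Metric.infDist ((F j : Ω → H) ω) (Jstar ω : Set H) ^ 2
      rw [h₁, Pi.sub_apply, h₂, infDist_eq_norm_sub_proj]
    refine ⟨hint.congr haediff, ?_⟩
    calc Metric.infDist (F j) S ^ 2 ≤ dist (F j) Φ ^ 2 :=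
          pow_le_pow_left₀ Metric.infDist_nonneg h1 2
      _ = ∫ ω, g j ω ^ 2 ∂μ := by
          rw [dist_eq_norm, heq, integral_congr_ae haediff]
  -- Step B : comparison with any tuple in M
  have stepB : ∀ Ψ : Fin m → Lp H 2 μ, (∀ j, Ψ j ∈ M) →
      ∑ j, ∫ ω, g j ω ^ 2 ∂μ ≤ ∑ j, dist (F j) (Ψ j) ^ 2 := by
    intro Ψ hΨ
    have hintR : ∀ j : Fin m, Integrable (fun ω => ‖(F j - Ψ j : Lp H 2 μ) ω‖ ^ 2) μ :=
      fun j => (L2_norm_sq_eq_integral (F j - Ψ j)).2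
    have h₁ : ∀ᵐ ω ∂μ, ∀ j, (Ψ j : Ω → H) ω ∈ J ω :=
      (MeasureTheory.ae_all_iff).mpr fun j => (hM (Ψ j)).mp (hΨ j)
    have h₂ : ∀ᵐ ω ∂μ, ∀ j, ((F j - Ψ j : Lp H 2 μ) : Ω → H) ω
        = (F j : Ω → H) ω - (Ψ j : Ω → H) ω :=
      (MeasureTheory.ae_all_iff).mpr fun j => Lp.coeFn_sub (F j) (Ψ j)
    have hae : (fun ω => ∑ j, g j ω ^ 2) ≤ᵐ[μ]
        fun ω => ∑ j, ‖(F j - Ψ j : Lp H 2 μ) ω‖ ^ 2 := by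
      filter_upwards [hJdim, hopt, h₁, h₂] with ω hdim hop hmem hsub
      haveI : FiniteDimensional ℂ (J ω) :=
        Module.rank_lt_aleph0_iff.mp (lt_of_le_of_lt hdim (Cardinal.nat_lt_aleph0 ℓ))
      have hfr : Module.finrank ℂ (J ω) ≤ ℓ := Module.finrank_le_of_rank_le hdim
      calc ∑ j, g j ω ^ 2
          ≤ ∑ j, (Metric.infDist ((F j : Ω → H) ω) (J ω : Set H)) ^ 2 :=
            hop (J ω) this hfr
        _ ≤ ∑ j, ‖(F j - Ψ j : Lp H 2 μ) ω‖ ^ 2 := by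
            refine Finset.sum_le_sum fun j _ => ?_
            have : Metric.infDist ((F j : Ω → H) ω) (J ω : Set H) ≤
                ‖(F j - Ψ j : Lp H 2 μ) ω‖ := by
              rw [hsub j, ← dist_eq_norm]
              exact Metric.infDist_le_dist_of_mem (hmem j)
            exact pow_le_pow_left₀ Metric.infDist_nonneg this 2
    calc ∑ j, ∫ ω, g j ω ^ 2 ∂μ
        = ∫ ω, ∑ j, g j ω ^ 2 ∂μ :=
          (integral_finset_sum _ fun j _ => (hkey j).1).symm
      _ ≤ ∫ ω, ∑ j, ‖(F j - Ψ j : Lp H 2 μ) ω‖ ^ 2 ∂μ :=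
          integral_mono_ae (integrable_finset_sum _ fun j _ => (hkey j).1)
            (integrable_finset_sum _ fun j _ => hintR j) hae
      _ = ∑ j, ∫ ω, ‖(F j - Ψ j : Lp H 2 μ) ω‖ ^ 2 ∂μ :=
          integral_finset_sum _ fun j _ => hintR j
      _ = ∑ j, dist (F j) (Ψ j) ^ 2 := by
          refine Finset.sum_congr rfl fun j _ => ?_
          rw [dist_eq_norm, (L2_norm_sq_eq_integral (F j - Ψ j)).1]
  -- Step C : pass to the infimum over M
  have hMne : (M : Set (Lp H 2 μ)).Nonempty := by
    refine ⟨0, ?_⟩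
    rw [SetLike.mem_coe, hM]
    filter_upwards [Lp.coeFn_zero H 2 μ] with ω h
    rw [h]; exact zero_mem _
  have hC : ∀ ε : ℝ, 0 < ε → ∑ j, ∫ ω, g j ω ^ 2 ∂μ ≤
      ∑ j, (Metric.infDist (F j) (M : Set (Lp H 2 μ)) + ε) ^ 2 := by
    intro ε hε
    have hch : ∀ j : Fin m, ∃ Ψ ∈ (M : Set (Lp H 2 μ)),
        dist (F j) Ψ < Metric.infDist (F j) (M : Set (Lp H 2 μ)) + ε :=
      fun j => (Metric.infDist_lt_iff hMne).mp (lt_add_of_pos_right _ hε)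
    choose Ψ hΨM hΨd using hch
    calc ∑ j, ∫ ω, g j ω ^ 2 ∂μ ≤ ∑ j, dist (F j) (Ψ j) ^ 2 := stepB Ψ hΨM
      _ ≤ ∑ j, (Metric.infDist (F j) (M : Set (Lp H 2 μ)) + ε) ^ 2 :=
          Finset.sum_le_sum fun j _ => pow_le_pow_left₀ dist_nonneg (hΨd j).le 2
  have hlim : Filter.Tendsto
      (fun ε : ℝ => ∑ j, (Metric.infDist (F j) (M : Set (Lp H 2 μ)) + ε) ^ 2)
      (nhdsWithin 0 (Set.Ioi 0))
      (𝓝 (∑ j, (Metric.infDist (F j) (M : Set (Lp H 2 μ)) + 0) ^ 2)) := by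
    refine (Continuous.tendsto ?_ 0).mono_left nhdsWithin_le_nhds
    exact continuous_finset_sum _ fun j _ => (continuous_const.add continuous_id).pow 2
  have hfinal : ∑ j, ∫ ω, g j ω ^ 2 ∂μ ≤
      ∑ j, (Metric.infDist (F j) (M : Set (Lp H 2 μ)) + 0) ^ 2 :=
    ge_of_tendsto hlim (Filter.eventually_of_mem self_mem_nhdsWithin
      fun ε hε => hC ε hε)
  simp only [add_zero] at hfinal
  calc ∑ j, Metric.infDist (F j) S ^ 2 ≤ ∑ j, ∫ ω, g j ω ^ 2 ∂μ :=
        Finset.sum_le_sum fun j _ => (hkey j).2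
    _ ≤ ∑ j, (Metric.infDist (F j) (M : Set (Lp H 2 μ))) ^ 2 := hfinal
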